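/- The bisection-protocol tiling B_k is a Mil_k-monochromatic tiling of V containing exactly 2^{k+1} − 1 tiles on which Mil_k takes the value 1 and exactly 2^k − 1 tiles on which Mil_k takes the value 2, and its average-case objective PAR equals 3·2^{k−1} − 1/2. -/

import Mathlib

open Finset

/-- The value space `{0,…,2^k−1} × {0,…,2^k−1}`. -/
def Vk (k : ℕ) : Finset (ℕ × ℕ) := Finset.range (2 ^ k) ×ˢ Finset.range (2 ^ k)

/-- A tiling of `Vk k`: a finite collection of nonempty rectangles partitioning `Vk k`. -/
def IsTiling (k : ℕ) (T : Finset (Finset (ℕ × ℕ))) : Prop :=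
  (∀ R ∈ T, ∃ S S' : Finset ℕ, R = S ×ˢ S') ∧
    (∀ R ∈ T, R.Nonempty) ∧ (∀ R ∈ T, R ⊆ Vk k) ∧ ∀ x ∈ Vk k, ∃! R, R ∈ T ∧ x ∈ R

/-- `f`-monochromaticity of a tiling. -/
def Mono {β : Type} (f : ℕ × ℕ → β) (T : Finset (Finset (ℕ × ℕ))) : Prop :=
  ∀ R ∈ T, ∀ x ∈ R, ∀ y ∈ R, f x = f y

/-- The tile of `T` containing `x` (union of all tiles containing `x`; for a
tiling this is exactly the unique tile containing `x`). -/
def tileOf (T : Finset (Finset (ℕ × ℕ))) (x : ℕ × ℕ) : Finset (ℕ × ℕ) :=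
  (T.filter fun R => x ∈ R).sup id

/-- The ideal region of `x`: the level set of `f x` inside `Vk k`. -/
def ideal {β : Type} [DecidableEq β] (k : ℕ) (f : ℕ × ℕ → β) (x : ℕ × ℕ) : Finset (ℕ × ℕ) :=
  (Vk k).filter fun y => f y = f x

/-- Average-case objective PAR of a tiling w.r.t. the uniform distribution. -/
def avgObjPAR {β : Type} [DecidableEq β] (k : ℕ) (f : ℕ × ℕ → β)
    (T : Finset (Finset (ℕ × ℕ))) : ℚ :=
  (∑ x ∈ Vk k, ((ideal k f x).card : ℚ) / ((tileOf T x).card : ℚ)) / 2 ^ (2 * k)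

/-- Average-case PAR with respect to party 1. -/
def avgPAR1 {β : Type} [DecidableEq β] (k : ℕ) (f : ℕ × ℕ → β)
    (T : Finset (Finset (ℕ × ℕ))) : ℚ :=
  (∑ x ∈ Vk k,
      (((Finset.range (2 ^ k)).filter fun y => f (x.1, y) = f x).card : ℚ) /
        (((Finset.range (2 ^ k)).filter fun y => (x.1, y) ∈ tileOf T x).card : ℚ)) /
    2 ^ (2 * k)

/-- Average-case PAR with respect to party 2. -/
def avgPAR2 {β : Type} [DecidableEq β] (k : ℕ) (f : ℕ × ℕ → β)
    (T : Finset (Finset (ℕ × ℕ))) : ℚ :=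
  (∑ x ∈ Vk k,
      (((Finset.range (2 ^ k)).filter fun y => f (y, x.2) = f x).card : ℚ) /
        (((Finset.range (2 ^ k)).filter fun y => (y, x.2) ∈ tileOf T x).card : ℚ)) /
    2 ^ (2 * k)

/-- The millionaires function: `1` if `x1 ≥ x2`, else `2`. -/
def Mil (x : ℕ × ℕ) : ℕ := if x.2 ≤ x.1 then 1 else 2

/-- The second-price auction function. -/
def Auc (x : ℕ × ℕ) : ℕ × ℕ := if x.2 ≤ x.1 then (1, x.2) else (2, x.1)

/-- Translate a tile by `(a, a)`. -/
def shiftTile (a : ℕ) (R : Finset (ℕ × ℕ)) : Finset (ℕ × ℕ) :=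
  R.image fun p => (p.1 + a, p.2 + a)

/-- The bisection-protocol tiling `B_k`. -/
def Btile : ℕ → Finset (Finset (ℕ × ℕ))
  | 0 => {{(0, 0)}}
  | j + 1 =>
    Btile j ∪ (Btile j).image (shiftTile (2 ^ j)) ∪
      {Finset.range (2 ^ j) ×ˢ Finset.Ico (2 ^ j) (2 ^ (j + 1)),
        Finset.Ico (2 ^ j) (2 ^ (j + 1)) ×ˢ Finset.range (2 ^ j)}

/-- The bounded-bisection-auction tiling `T_{c,i}`. -/
def BBA : ℕ → ℕ → Finset (Finset (ℕ × ℕ))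
  | 0, i =>
    (Finset.range (2 ^ i)).image (fun p => Finset.Ico p (2 ^ i) ×ˢ ({p} : Finset ℕ)) ∪
      (Finset.range (2 ^ i - 1)).image fun p => ({p} : Finset ℕ) ×ˢ Finset.Ico (p + 1) (2 ^ i)
  | c + 1, i =>
    BBA c i ∪ (BBA c i).image (shiftTile (2 ^ (c + i))) ∪
      (Finset.range (2 ^ (c + i))).image
        (fun j => Finset.Ico (2 ^ (c + i)) (2 ^ (c + i + 1)) ×ˢ ({j} : Finset ℕ)) ∪
      (Finset.range (2 ^ (c + i))).image fun j =>
        ({j} : Finset ℕ) ×ˢ Finset.Ico (2 ^ (c + i)) (2 ^ (c + i + 1))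

/-- The public-good function: `true` iff `x1 + x2 ≥ 2^k − 1` ("Build"). -/
def PG (k : ℕ) (x : ℕ × ℕ) : Bool := decide (2 ^ k - 1 ≤ x.1 + x.2)

/-- The truthful public-good function: `none` = "Do Not Build". -/
def TPG (c : ℕ) (x : ℕ × ℕ) : Option (ℕ × ℕ) :=
  if x.1 + x.2 < c then none else some (c - x.2, c - x.1)

/-- The tiling of `Vk k` into singleton cells (sealed-bid auction). -/
def sealedTiling (k : ℕ) : Finset (Finset (ℕ × ℕ)) :=
  (Vk k).image fun x => ({x} : Finset (ℕ × ℕ))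

-- helper lemmas to insert before stmt3

lemma mil_one_iff (x : ℕ × ℕ) : Mil x = 1 ↔ x.2 ≤ x.1 := by
  unfold Mil; split <;> simp_all

lemma mil_two_iff (x : ℕ × ℕ) : Mil x = 2 ↔ x.1 < x.2 := by
  unfold Mil; split <;> rename_i h <;> simp <;> omega

lemma mem_shiftTile {a : ℕ} {R : Finset (ℕ × ℕ)} {x : ℕ × ℕ} :
    x ∈ shiftTile a R ↔ a ≤ x.1 ∧ a ≤ x.2 ∧ (x.1 - a, x.2 - a) ∈ R := by
  unfold shiftTile
  simp only [Finset.mem_image]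
  constructor
  · rintro ⟨⟨p1, p2⟩, hp, rfl⟩
    simp only [Nat.add_sub_cancel]
    exact ⟨Nat.le_add_left _ _, Nat.le_add_left _ _, hp⟩
  · rintro ⟨h1, h2, hp⟩
    exact ⟨(x.1 - a, x.2 - a), hp, by cases x; simp; omega⟩

lemma shiftTile_injective (a : ℕ) : Function.Injective (shiftTile a) := by
  have : Function.Injective (fun p : ℕ × ℕ => (p.1 + a, p.2 + a)) := by
    rintro ⟨p1, p2⟩ ⟨q1, q2⟩ h
    simp only [Prod.mk.injEq] at h ⊢; omega
  intro R S h
  exact Finset.image_injective this h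

lemma mem_Vk {k : ℕ} {x : ℕ × ℕ} : x ∈ Vk k ↔ x.1 < 2 ^ k ∧ x.2 < 2 ^ k := by
  unfold Vk; simp [Finset.mem_product]

lemma mem_Btile_succ {j : ℕ} {R : Finset (ℕ × ℕ)} :
    R ∈ Btile (j + 1) ↔ R ∈ Btile j ∨ (∃ R₀ ∈ Btile j, R = shiftTile (2 ^ j) R₀) ∨
      R = Finset.range (2 ^ j) ×ˢ Finset.Ico (2 ^ j) (2 ^ (j + 1)) ∨
      R = Finset.Ico (2 ^ j) (2 ^ (j + 1)) ×ˢ Finset.range (2 ^ j) := by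
  show R ∈ _ ∪ _ ∪ _ ↔ _
  simp only [Finset.mem_union, Finset.mem_image, Finset.mem_insert, Finset.mem_singleton,
    eq_comm (b := R)]
  aesop

lemma mil_add {a : ℕ} (x : ℕ × ℕ) : Mil (x.1 + a, x.2 + a) = Mil x := by
  unfold Mil
  have h : (x.2 + a ≤ x.1 + a) ↔ (x.2 ≤ x.1) := by omega
  simp only [h]

lemma mil_sub {a : ℕ} {x : ℕ × ℕ} (h1 : a ≤ x.1) (h2 : a ≤ x.2) :
    Mil (x.1 - a, x.2 - a) = Mil x := by
  unfold Mil
  have h : (x.2 - a ≤ x.1 - a) ↔ (x.2 ≤ x.1) := by omega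
  simp only [h]

lemma Vk_mono {j : ℕ} : Vk j ⊆ Vk (j + 1) := by
  intro x hx
  rw [mem_Vk] at hx ⊢
  have : (2:ℕ) ^ j ≤ 2 ^ (j + 1) := Nat.pow_le_pow_right (by norm_num) (by omega)
  omega

lemma shiftTile_product (a : ℕ) (S S' : Finset ℕ) :
    shiftTile a (S ×ˢ S') = (S.image (· + a)) ×ˢ (S'.image (· + a)) := by
  ext ⟨x1, x2⟩
  simp only [mem_shiftTile, Finset.mem_product, Finset.mem_image]
  constructor
  · rintro ⟨h1, h2, h3, h4⟩
    exact ⟨⟨x1 - a, h3, by omega⟩, ⟨x2 - a, h4, by omega⟩⟩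
  · rintro ⟨⟨b, hb, rfl⟩, ⟨c, hc, rfl⟩⟩
    simp only [Nat.add_sub_cancel]
    exact ⟨Nat.le_add_left _ _, Nat.le_add_left _ _, hb, hc⟩

lemma forall_shiftTile_mil {a : ℕ} {R : Finset (ℕ × ℕ)} {v : ℕ} :
    (∀ x ∈ shiftTile a R, Mil x = v) ↔ (∀ x ∈ R, Mil x = v) := by
  constructor
  · intro h x hx
    have hmem : (x.1 + a, x.2 + a) ∈ shiftTile a R := by
      rw [mem_shiftTile]
      simp only [Nat.add_sub_cancel]
      exact ⟨Nat.le_add_left _ _, Nat.le_add_left _ _, by simpa using hx⟩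
    rw [← mil_add (a := a) x]
    exact h _ hmem
  · intro h x hx
    rw [mem_shiftTile] at hx
    rw [← mil_sub hx.1 hx.2.1]
    exact h _ hx.2.2

lemma Btile_props (j : ℕ) :
    IsTiling j (Btile j) ∧ Mono Mil (Btile j) ∧
      ((Btile j).filter fun R => ∀ x ∈ R, Mil x = 1).card = 2 ^ (j + 1) - 1 ∧
      ((Btile j).filter fun R => ∀ x ∈ R, Mil x = 2).card = 2 ^ j - 1 := by
  induction j with
  | zero =>
    have hB : Btile 0 = {{(0, 0)}} := rfl
    refine ⟨⟨?_, ?_, ?_, ?_⟩, ?_, ?_, ?_⟩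
    · intro R hR
      rw [hB, Finset.mem_singleton] at hR
      exact ⟨{0}, {0}, by rw [hR]; rfl⟩
    · intro R hR
      rw [hB, Finset.mem_singleton] at hR
      exact ⟨(0, 0), by rw [hR]; exact Finset.mem_singleton_self _⟩
    · intro R hR
      rw [hB, Finset.mem_singleton] at hR
      subst hR
      intro x hx
      rw [Finset.mem_singleton] at hx
      subst hx
      rw [mem_Vk]; omega
    · intro x hx
      rw [mem_Vk] at hx
      have hx0 : x = (0, 0) := by
        obtain ⟨x1, x2⟩ := x; simp only [pow_zero] at hx
        simp only [Prod.mk.injEq]; omega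
      subst hx0
      refine ⟨{(0, 0)}, ⟨by rw [hB]; exact Finset.mem_singleton_self _,
        Finset.mem_singleton_self _⟩, ?_⟩
      rintro R ⟨hR, -⟩
      rwa [hB, Finset.mem_singleton] at hR
    · intro R hR x hx y hy
      rw [hB, Finset.mem_singleton] at hR
      subst hR
      rw [Finset.mem_singleton] at hx hy
      rw [hx, hy]
    · rw [hB]; decide
    · rw [hB]; decide
  | succ j ih =>
    obtain ⟨⟨ihrect, ihne, ihsub, ihuniq⟩, ihmono, ihc1, ihc2⟩ := ih
    have hn : 0 < 2 ^ j := by positivity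
    have hps : (2:ℕ) ^ (j + 1) = 2 ^ j * 2 := pow_succ 2 j
    set n := 2 ^ j with hn'
    set L : Finset (ℕ × ℕ) := Finset.range (2 ^ j) ×ˢ Finset.Ico (2 ^ j) (2 ^ (j + 1)) with hL'
    set U : Finset (ℕ × ℕ) := Finset.Ico (2 ^ j) (2 ^ (j + 1)) ×ˢ Finset.range (2 ^ j) with hU'
    have memL : ∀ x : ℕ × ℕ, x ∈ L ↔ x.1 < n ∧ n ≤ x.2 ∧ x.2 < 2 ^ (j + 1) := by
      intro x
      rw [hL', Finset.mem_product, Finset.mem_range, Finset.mem_Ico]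
    have memU : ∀ x : ℕ × ℕ, x ∈ U ↔ n ≤ x.1 ∧ x.1 < 2 ^ (j + 1) ∧ x.2 < n := by
      intro x
      rw [hU', Finset.mem_product, Finset.mem_range, Finset.mem_Ico]
      tauto
    have hsubn : ∀ R ∈ Btile j, ∀ x ∈ R, x.1 < n ∧ x.2 < n := by
      intro R hR x hx
      have := ihsub R hR hx
      rw [mem_Vk] at this
      exact this
    -- the tiling property
    have htiling : IsTiling (j + 1) (Btile (j + 1)) := by
      refine ⟨?_, ?_, ?_, ?_⟩
      · intro R hR
        rw [mem_Btile_succ] at hR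
        rcases hR with hR | ⟨R₀, hR₀, rfl⟩ | rfl | rfl
        · exact ihrect R hR
        · obtain ⟨S, S', rfl⟩ := ihrect R₀ hR₀
          exact ⟨_, _, shiftTile_product n S S'⟩
        · exact ⟨_, _, rfl⟩
        · exact ⟨_, _, rfl⟩
      · intro R hR
        rw [mem_Btile_succ] at hR
        rcases hR with hR | ⟨R₀, hR₀, rfl⟩ | rfl | rfl
        · exact ihne R hR
        · exact (ihne R₀ hR₀).image _
        · exact ⟨(0, n), (memL _).mpr ⟨hn, le_refl n, by omega⟩⟩
        · exact ⟨(n, 0), (memU _).mpr ⟨le_refl n, by omega, hn⟩⟩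
      · intro R hR
        rw [mem_Btile_succ] at hR
        rcases hR with hR | ⟨R₀, hR₀, rfl⟩ | rfl | rfl
        · exact (ihsub R hR).trans Vk_mono
        · intro x hx
          rw [mem_shiftTile] at hx
          have := hsubn R₀ hR₀ _ hx.2.2
          rw [mem_Vk]
          simp only at this
          omega
        · intro x hx
          rw [memL] at hx
          rw [mem_Vk]
          omega
        · intro x hx
          rw [memU] at hx
          rw [mem_Vk]
          omega
      · intro x hx
        rw [mem_Vk] at hx
        rcases lt_or_ge x.1 n with h1 | h1 <;> rcases lt_or_ge x.2 n with h2 | h2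
        · -- both small : tile from Btile j
          obtain ⟨R, ⟨hR, hxR⟩, hu⟩ := ihuniq x (by rw [mem_Vk]; exact ⟨h1, h2⟩)
          refine ⟨R, ⟨by rw [mem_Btile_succ]; exact Or.inl hR, hxR⟩, ?_⟩
          rintro R' ⟨hR', hxR'⟩
          rw [mem_Btile_succ] at hR'
          rcases hR' with hR' | ⟨R₀, hR₀, rfl⟩ | rfl | rfl
          · exact hu R' ⟨hR', hxR'⟩
          · rw [mem_shiftTile] at hxR'; omega
          · rw [memL] at hxR'; omega
          · rw [memU] at hxR'; omega
        · -- x.1 < n ≤ x.2 : tile L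
          refine ⟨L, ⟨by rw [mem_Btile_succ]; tauto, (memL _).mpr ⟨h1, h2, hx.2⟩⟩, ?_⟩
          rintro R' ⟨hR', hxR'⟩
          rw [mem_Btile_succ] at hR'
          rcases hR' with hR' | ⟨R₀, hR₀, rfl⟩ | rfl | rfl
          · have := hsubn R' hR' _ hxR'; omega
          · rw [mem_shiftTile] at hxR'; omega
          · rfl
          · rw [memU] at hxR'; omega
        · -- n ≤ x.1, x.2 < n : tile U
          refine ⟨U, ⟨by rw [mem_Btile_succ]; tauto, (memU _).mpr ⟨h1, hx.1, h2⟩⟩, ?_⟩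
          rintro R' ⟨hR', hxR'⟩
          rw [mem_Btile_succ] at hR'
          rcases hR' with hR' | ⟨R₀, hR₀, rfl⟩ | rfl | rfl
          · have := hsubn R' hR' _ hxR'; omega
          · rw [mem_shiftTile] at hxR'; omega
          · rw [memL] at hxR'; omega
          · rfl
        · -- both large : shifted tile
          obtain ⟨R₀, ⟨hR₀, hyR₀⟩, hu⟩ := ihuniq (x.1 - n, x.2 - n)
            (by rw [mem_Vk]; constructor <;> simp <;> omega)
          refine ⟨shiftTile n R₀, ⟨by rw [mem_Btile_succ]; exact Or.inr (Or.inl ⟨R₀, hR₀, rfl⟩),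
            (mem_shiftTile).mpr ⟨h1, h2, hyR₀⟩⟩, ?_⟩
          rintro R' ⟨hR', hxR'⟩
          rw [mem_Btile_succ] at hR'
          rcases hR' with hR' | ⟨R₁, hR₁, rfl⟩ | rfl | rfl
          · have := hsubn R' hR' _ hxR'; omega
          · rw [mem_shiftTile] at hxR'
            rw [hu R₁ ⟨hR₁, hxR'.2.2⟩]
          · rw [memL] at hxR'; omega
          · rw [memU] at hxR'; omega
    -- monochromaticity
    have hmono : Mono Mil (Btile (j + 1)) := by
      intro R hR x hx y hy
      rw [mem_Btile_succ] at hR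
      rcases hR with hR | ⟨R₀, hR₀, rfl⟩ | rfl | rfl
      · exact ihmono R hR x hx y hy
      · rw [mem_shiftTile] at hx hy
        rw [← mil_sub hx.1 hx.2.1, ← mil_sub hy.1 hy.2.1]
        exact ihmono R₀ hR₀ _ hx.2.2 _ hy.2.2
      · rw [memL] at hx hy
        rw [(mil_two_iff x).mpr (by omega), (mil_two_iff y).mpr (by omega)]
      · rw [memU] at hx hy
        rw [(mil_one_iff x).mpr (by omega), (mil_one_iff y).mpr (by omega)]
    refine ⟨htiling, hmono, ?_, ?_⟩
    -- counting
    all_goals {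
      have hd1 : Disjoint (Btile j) ((Btile j).image (shiftTile n)) := by
        rw [Finset.disjoint_left]
        intro R hR hR'
        rw [Finset.mem_image] at hR'
        obtain ⟨R₀, hR₀, rfl⟩ := hR'
        obtain ⟨p, hp⟩ := ihne R₀ hR₀
        have hmem : (p.1 + n, p.2 + n) ∈ shiftTile n R₀ := by
          rw [mem_shiftTile]
          simp only [Nat.add_sub_cancel]
          exact ⟨Nat.le_add_left _ _, Nat.le_add_left _ _, by simpa using hp⟩
        have := hsubn _ hR _ hmem
        omega
      have hLU : L ∉ Btile j ∪ (Btile j).image (shiftTile n) ∧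
          U ∉ Btile j ∪ (Btile j).image (shiftTile n) := by
        constructor <;> rw [Finset.mem_union, Finset.mem_image] <;>
          rintro (h | ⟨R₀, hR₀, heq⟩)
        · have := hsubn _ h (0, n) ((memL _).mpr ⟨hn, le_refl n, by omega⟩)
          simp only at this; omega
        · have hm : (0, n) ∈ shiftTile n R₀ := by
            rw [heq]; exact (memL _).mpr ⟨hn, le_refl n, by omega⟩
          rw [mem_shiftTile] at hm
          simp only at hm; omega
        · have := hsubn _ h (n, 0) ((memU _).mpr ⟨le_refl n, by omega, hn⟩)
          simp only at this; omega
        · have hm : (n, 0) ∈ shiftTile n R₀ := by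
            rw [heq]; exact (memU _).mpr ⟨le_refl n, by omega, hn⟩
          rw [mem_shiftTile] at hm
          simp only at hm; omega
      have hBT : Btile (j + 1) = (Btile j ∪ (Btile j).image (shiftTile n)) ∪ {L, U} := rfl
      have hd2 : Disjoint (Btile j ∪ (Btile j).image (shiftTile n)) ({L, U} : Finset _) := by
        rw [Finset.disjoint_right]
        intro R hR
        rw [Finset.mem_insert, Finset.mem_singleton] at hR
        rcases hR with rfl | rfl
        · exact hLU.1
        · exact hLU.2
      rw [hBT, Finset.filter_union, Finset.filter_union,
        Finset.card_union_of_disjoint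
          (by rw [← Finset.filter_union]; exact Finset.disjoint_filter_filter hd2),
        Finset.card_union_of_disjoint (Finset.disjoint_filter_filter hd1),
        Finset.filter_image]
      have himg : ∀ v : ℕ, (Btile j).filter (fun R => ∀ x ∈ shiftTile n R, Mil x = v) =
          (Btile j).filter (fun R => ∀ x ∈ R, Mil x = v) := by
        intro v
        apply Finset.filter_congr
        intro R hR
        simp only [forall_shiftTile_mil]
      have hML : ∀ x ∈ L, Mil x = 2 := by
        intro x hx; rw [memL] at hx; rw [mil_two_iff]; omega
      have hMU : ∀ x ∈ U, Mil x = 1 := by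
        intro x hx; rw [memU] at hx; rw [mil_one_iff]; omega
      have hNL1 : ¬ ∀ x ∈ L, Mil x = 1 := by
        intro h
        have := h (0, n) ((memL _).mpr ⟨hn, le_refl n, by omega⟩)
        rw [mil_one_iff] at this
        simp only at this; omega
      have hNU2 : ¬ ∀ x ∈ U, Mil x = 2 := by
        intro h
        have := h (n, 0) ((memU _).mpr ⟨le_refl n, by omega, hn⟩)
        rw [mil_two_iff] at this
        simp only at this; omega
      rw [himg, Finset.card_image_of_injective _ (shiftTile_injective n)]
      first
      | (rw [Finset.filter_insert, if_neg hNL1, Finset.filter_singleton, if_pos hMU,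
          ihc1, Finset.card_singleton]; omega)
      | (rw [Finset.filter_insert, if_pos hML, Finset.filter_singleton, if_neg hNU2,
          ihc2]; simp; omega)
    }

lemma tileOf_eq {k : ℕ} {T : Finset (Finset (ℕ × ℕ))} (hT : IsTiling k T)
    {R : Finset (ℕ × ℕ)} (hR : R ∈ T) {x : ℕ × ℕ} (hx : x ∈ R) : tileOf T x = R := by
  obtain ⟨-, -, hsub, huniq⟩ := hT
  obtain ⟨R', hR', hu⟩ := huniq x (hsub R hR hx)
  have hfil : T.filter (fun S => x ∈ S) = {R} := by
    ext S
    simp only [Finset.mem_filter, Finset.mem_singleton]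
    constructor
    · rintro ⟨hS, hxS⟩
      rw [hu S ⟨hS, hxS⟩, ← hu R ⟨hR, hx⟩]
    · rintro rfl
      exact ⟨hR, hx⟩
  rw [tileOf, hfil, Finset.sup_singleton, id]

lemma sum_Vk_eq {k : ℕ} {T : Finset (Finset (ℕ × ℕ))} (hT : IsTiling k T)
    (g : ℕ × ℕ → ℚ) : ∑ x ∈ Vk k, g x = ∑ R ∈ T, ∑ x ∈ R, g x := by
  obtain ⟨-, -, hsub, huniq⟩ := hT
  have hV : Vk k = T.biUnion id := by
    ext x
    simp only [Finset.mem_biUnion, id]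
    constructor
    · intro hx
      obtain ⟨R, ⟨hR, hxR⟩, -⟩ := huniq x hx
      exact ⟨R, hR, hxR⟩
    · rintro ⟨R, hR, hxR⟩
      exact hsub R hR hxR
  have hdisj : Set.PairwiseDisjoint (↑T : Set (Finset (ℕ × ℕ))) id := by
    intro R hR S hS hRS
    simp only [id, Function.onFun]
    rw [Finset.disjoint_left]
    intro x hxR hxS
    have hxV := hsub R (by simpa using hR) hxR
    obtain ⟨W, -, hu⟩ := huniq x hxV
    exact hRS ((hu R ⟨by simpa using hR, hxR⟩).trans (hu S ⟨by simpa using hS, hxS⟩).symm)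
  rw [hV, Finset.sum_biUnion hdisj]
  rfl

lemma tile_sum {k : ℕ} {T : Finset (Finset (ℕ × ℕ))} (hT : IsTiling k T)
    {R : Finset (ℕ × ℕ)} (hR : R ∈ T) {v : ℕ} (hv : ∀ x ∈ R, Mil x = v) :
    ∑ x ∈ R, ((ideal k Mil x).card : ℚ) / ((tileOf T x).card : ℚ)
      = (((Vk k).filter fun y => Mil y = v).card : ℚ) := by
  have hne := hT.2.1 R hR
  have hcard : (R.card : ℚ) ≠ 0 := by
    simp only [ne_eq, Nat.cast_eq_zero, Finset.card_eq_zero]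
    exact hne.ne_empty
  have : ∀ x ∈ R, ((ideal k Mil x).card : ℚ) / ((tileOf T x).card : ℚ)
      = (((Vk k).filter fun y => Mil y = v).card : ℚ) / (R.card : ℚ) := by
    intro x hx
    rw [tileOf_eq hT hR hx, ideal, hv x hx]
  rw [Finset.sum_congr rfl this, Finset.sum_const, nsmul_eq_mul]
  field_simp

lemma card_mil_one (k : ℕ) :
    ((Vk k).filter fun y => Mil y = 1).card * 2 = 2 ^ k * (2 ^ k + 1) := by
  have h1 : ((Vk k).filter fun y => Mil y = 1).card
      = ∑ a ∈ Finset.range (2 ^ k), (a + 1) := by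
    rw [Finset.card_filter, Vk, Finset.sum_product]
    apply Finset.sum_congr rfl
    intro a ha
    rw [Finset.mem_range] at ha
    have hcongr : ∀ b ∈ Finset.range (2 ^ k), (if Mil (a, b) = 1 then 1 else 0)
        = if b ≤ a then 1 else 0 := by
      intro b hb
      simp only [mil_one_iff]
    rw [Finset.sum_congr rfl hcongr, ← Finset.card_filter]
    have hfil : (Finset.range (2 ^ k)).filter (fun b => b ≤ a) = Finset.range (a + 1) := by
      ext b
      simp only [Finset.mem_filter, Finset.mem_range]
      omega
    rw [hfil, Finset.card_range]
  rw [h1, Finset.sum_add_distrib, Finset.sum_const, Finset.card_range, smul_eq_mul, mul_one,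
    add_mul, Finset.sum_range_id_mul_two]
  have hn : 0 < 2 ^ k := by positivity
  obtain ⟨m, hm⟩ : ∃ m, 2 ^ k = m + 1 := ⟨2 ^ k - 1, by omega⟩
  rw [hm]
  simp only [Nat.add_sub_cancel]
  ring

lemma card_mil_split (k : ℕ) :
    ((Vk k).filter fun y => Mil y = 1).card + ((Vk k).filter fun y => Mil y = 2).card
      = 2 ^ k * 2 ^ k := by
  have h : ((Vk k).filter fun y => Mil y = 2) = ((Vk k).filter fun y => ¬ Mil y = 1) := by
    apply Finset.filter_congr
    intro x _
    rw [mil_one_iff, mil_two_iff]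
    omega
  rw [h, Finset.card_filter_add_card_filter_not, Vk, Finset.card_product,
    Finset.card_range]

/-- The bisection-protocol tiling `B_k` is a `Mil`-monochromatic
tiling of `V` with exactly `2^{k+1} − 1` tiles on which `Mil` takes the value
`1` and exactly `2^k − 1` tiles on which it takes the value `2`, and its
average-case objective PAR equals `3·2^{k−1} − 1/2`. -/
theorem stmt3 (k : ℕ) (hk : 1 ≤ k) :
    IsTiling k (Btile k) ∧ Mono Mil (Btile k) ∧
      ((Btile k).filter fun R => ∀ x ∈ R, Mil x = 1).card = 2 ^ (k + 1) - 1 ∧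
      ((Btile k).filter fun R => ∀ x ∈ R, Mil x = 2).card = 2 ^ k - 1 ∧
      avgObjPAR k Mil (Btile k) = 3 * 2 ^ (k - 1) - 1 / 2 := by
  obtain ⟨htile, hmono, hc1, hc2⟩ := Btile_props k
  refine ⟨htile, hmono, hc1, hc2, ?_⟩
  have hne := htile.2.1
  have hsplit : Btile k = ((Btile k).filter fun R => ∀ x ∈ R, Mil x = 1) ∪
      ((Btile k).filter fun R => ∀ x ∈ R, Mil x = 2) := by
    ext R
    simp only [Finset.mem_union, Finset.mem_filter]
    constructor
    · intro hR
      obtain ⟨x₀, hx₀⟩ := hne R hR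
      have hM : Mil x₀ = 1 ∨ Mil x₀ = 2 := by unfold Mil; split <;> simp
      rcases hM with h | h
      · exact Or.inl ⟨hR, fun x hx => (hmono R hR x hx x₀ hx₀).trans h⟩
      · exact Or.inr ⟨hR, fun x hx => (hmono R hR x hx x₀ hx₀).trans h⟩
    · rintro (⟨h, -⟩ | ⟨h, -⟩) <;> exact h
  have hdisj : Disjoint ((Btile k).filter fun R => ∀ x ∈ R, Mil x = 1)
      ((Btile k).filter fun R => ∀ x ∈ R, Mil x = 2) := by
    rw [Finset.disjoint_left]
    intro R h1 h2
    rw [Finset.mem_filter] at h1 h2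
    obtain ⟨x₀, hx₀⟩ := hne R h1.1
    have := (h1.2 x₀ hx₀).symm.trans (h2.2 x₀ hx₀)
    omega
  rw [avgObjPAR, sum_Vk_eq htile]
  have hsum : ∑ R ∈ Btile k,
        (∑ x ∈ R, ((ideal k Mil x).card : ℚ) / ((tileOf (Btile k) x).card : ℚ))
      = ((((Btile k).filter fun R => ∀ x ∈ R, Mil x = 1).card : ℚ) *
          (((Vk k).filter fun y => Mil y = 1).card : ℚ)) +
        ((((Btile k).filter fun R => ∀ x ∈ R, Mil x = 2).card : ℚ) *
          (((Vk k).filter fun y => Mil y = 2).card : ℚ)) := by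
    rw [Finset.sum_congr hsplit fun _ _ => rfl, Finset.sum_union hdisj]
    congr 1
    · rw [Finset.sum_congr rfl (fun R hR => ?_), Finset.sum_const, nsmul_eq_mul]
      rw [Finset.mem_filter] at hR
      exact tile_sum htile hR.1 hR.2
    · rw [Finset.sum_congr rfl (fun R hR => ?_), Finset.sum_const, nsmul_eq_mul]
      rw [Finset.mem_filter] at hR
      exact tile_sum htile hR.1 hR.2
  rw [hsum, hc1, hc2]
  obtain ⟨m, rfl⟩ : ∃ m, k = m + 1 := ⟨k - 1, by omega⟩
  have hAq : ((((Vk (m + 1)).filter fun y => Mil y = 1).card : ℚ)) * 2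
      = 2 ^ (m + 1) * (2 ^ (m + 1) + 1) := by
    have := congrArg (Nat.cast : ℕ → ℚ) (card_mil_one (m + 1))
    push_cast at this
    linarith
  have hABq : ((((Vk (m + 1)).filter fun y => Mil y = 1).card : ℚ)) +
      ((((Vk (m + 1)).filter fun y => Mil y = 2).card : ℚ))
      = 2 ^ (m + 1) * 2 ^ (m + 1) := by
    have := congrArg (Nat.cast : ℕ → ℚ) (card_mil_split (m + 1))
    push_cast at this
    linarith
  have hA' : ((((Vk (m + 1)).filter fun y => Mil y = 1).card : ℚ))
      = 2 ^ m * (2 ^ (m + 1) + 1) := by linear_combination hAq / 2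
  have hB' : ((((Vk (m + 1)).filter fun y => Mil y = 2).card : ℚ))
      = 2 ^ (m + 1) * 2 ^ (m + 1) - 2 ^ m * (2 ^ (m + 1) + 1) := by
    linear_combination hABq - hA'
  have e1 : (((2 ^ (m + 1 + 1) - 1 : ℕ)) : ℚ) = 2 ^ (m + 2) - 1 := by
    rw [Nat.cast_sub Nat.one_le_two_pow]
    push_cast
    ring
  have e2 : (((2 ^ (m + 1) - 1 : ℕ)) : ℚ) = 2 ^ (m + 1) - 1 := by
    rw [Nat.cast_sub Nat.one_le_two_pow]
    push_cast
    ring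
  rw [hA', hB', e1, e2, show m + 1 - 1 = m from rfl]
  have hpos : ((2 : ℚ)) ^ (2 * (m + 1)) ≠ 0 := by positivity
  field_simp
  ring
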